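/- arXiv:1208.0176 — 6 statements merged into one kernel-verified Lean document; each statement's English description precedes it below -/
import Mathlib

section
/- For any formula φ of dependence logic, any model 𝔄, any team X whose domain contains the free variables of φ, and any set V of variables with Fr(φ) ⊆ V ⊆ Dom(X), we have 𝔄 ⊨_X φ if and only if 𝔄 ⊨_{X↾V} φ (locality: satisfaction depends only on the free variables). -/
/-- A first-order vocabulary: function and relation symbols of each arity. -/
structure Lang where
  Func : ℕ → Type
  Rel : ℕ → Type

/-- Terms of a vocabulary, with variables indexed by `ℕ`. -/
inductive Term (L : Lang) where
  | var : ℕ → Term L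
  | func : {n : ℕ} → L.Func n → (Fin n → Term L) → Term L

/-- Formulas of dependence logic in negation normal form: first-order literals,
dependence atoms `=(t₁,…,t_{n-1}, t)`, conjunction, disjunction, quantifiers. -/
inductive Formula (L : Lang) where
  | rel : {n : ℕ} → L.Rel n → (Fin n → Term L) → Formula L
  | nrel : {n : ℕ} → L.Rel n → (Fin n → Term L) → Formula L
  | eq : Term L → Term L → Formula L
  | neq : Term L → Term L → Formula L
  | dep : List (Term L) → Term L → Formula L
  | and : Formula L → Formula L → Formula L
  | or : Formula L → Formula L → Formula L
  | ex : ℕ → Formula L → Formula L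
  | all : ℕ → Formula L → Formula L

/-- A structure (model) for the vocabulary `L` with domain `A`. -/
structure Struc (L : Lang) (A : Type*) where
  funcs : {n : ℕ} → L.Func n → (Fin n → A) → A
  rels : {n : ℕ} → L.Rel n → (Fin n → A) → Prop

variable {L : Lang} {A : Type*}

/-- Value `t^𝔄⟨s⟩` of a term under an assignment. -/
def Term.eval (M : Struc L A) (s : ℕ → A) : Term L → A
  | .var v => s v
  | .func f ts => M.funcs f fun i => (ts i).eval M s

/-- Variables occurring in a term. -/
def Term.vars : Term L → Finset ℕ
  | .var v => {v}
  | .func _ ts => Finset.univ.biUnion fun i => (ts i).vars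

/-- Free variables of a formula. -/
def Formula.fv : Formula L → Finset ℕ
  | .rel _ ts => Finset.univ.biUnion fun i => (ts i).vars
  | .nrel _ ts => Finset.univ.biUnion fun i => (ts i).vars
  | .eq t u => t.vars ∪ u.vars
  | .neq t u => t.vars ∪ u.vars
  | .dep ts t => ts.foldr (fun u s => u.vars ∪ s) t.vars
  | .and φ ψ => φ.fv ∪ ψ.fv
  | .or φ ψ => φ.fv ∪ ψ.fv
  | .ex x φ => φ.fv.erase x
  | .all x φ => φ.fv.erase x

/-- A formula is first-order if it contains no dependence atoms. -/
def Formula.IsFO : Formula L → Prop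
  | .rel _ _ => True
  | .nrel _ _ => True
  | .eq _ _ => True
  | .neq _ _ => True
  | .dep _ _ => False
  | .and φ ψ => φ.IsFO ∧ ψ.IsFO
  | .or φ ψ => φ.IsFO ∧ ψ.IsFO
  | .ex _ φ => φ.IsFO
  | .all _ φ => φ.IsFO

/-- Team semantics of dependence logic.  A team is a set of assignments `ℕ → A`. -/
def TSat (M : Struc L A) : Formula L → Set (ℕ → A) → Prop
  | .rel R ts => fun X => ∀ s ∈ X, M.rels R fun i => (ts i).eval M s
  | .nrel R ts => fun X => ∀ s ∈ X, ¬ M.rels R fun i => (ts i).eval M s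
  | .eq t u => fun X => ∀ s ∈ X, t.eval M s = u.eval M s
  | .neq t u => fun X => ∀ s ∈ X, t.eval M s ≠ u.eval M s
  | .dep ts t => fun X => ∀ s ∈ X, ∀ s' ∈ X,
      (∀ u ∈ ts, u.eval M s = u.eval M s') → t.eval M s = t.eval M s'
  | .and φ ψ => fun X => TSat M φ X ∧ TSat M ψ X
  | .or φ ψ => fun X => ∃ Y Z, X = Y ∪ Z ∧ TSat M φ Y ∧ TSat M ψ Z
  | .ex x φ => fun X => ∃ F : (ℕ → A) → A,
      TSat M φ ((fun s => Function.update s x (F s)) '' X)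
  | .all x φ => fun X =>
      TSat M φ {s' | ∃ s ∈ X, ∃ a : A, s' = Function.update s x a}

/-- Ordinary (Tarskian) satisfaction of a formula by a single assignment
(dependence atoms are read as trivially true; we only use this for
first-order formulas). -/
def Sat (M : Struc L A) (s : ℕ → A) : Formula L → Prop
  | .rel R ts => M.rels R fun i => (ts i).eval M s
  | .nrel R ts => ¬ M.rels R fun i => (ts i).eval M s
  | .eq t u => t.eval M s = u.eval M s
  | .neq t u => t.eval M s ≠ u.eval M s
  | .dep _ _ => True
  | .and φ ψ => Sat M s φ ∧ Sat M s ψ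
  | .or φ ψ => Sat M s φ ∨ Sat M s ψ
  | .ex x φ => ∃ a : A, Sat M (Function.update s x a) φ
  | .all x φ => ∀ a : A, Sat M (Function.update s x a) φ


/-- The team `X↾V`: all assignments agreeing on `V` with some member of `X`. -/
def restrictTeam (X : Set (ℕ → A)) (V : Finset ℕ) : Set (ℕ → A) :=
  {s₂ | ∃ s ∈ X, ∀ v ∈ V, s₂ v = s v}

theorem Term.eval_congr (M : Struc L A) {s s' : ℕ → A} :
    ∀ t : Term L, (∀ v ∈ t.vars, s v = s' v) → t.eval M s = t.eval M s'
  | .var v, h => h v (by simp [Term.vars])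
  | .func f ts, h => by
      simp only [Term.eval]
      congr 1
      funext i
      exact Term.eval_congr M (ts i) fun v hv =>
        h v (by simp only [Term.vars, Finset.mem_biUnion]; exact ⟨i, Finset.mem_univ i, hv⟩)

theorem dep_fv_subset₁ (ts : List (Term L)) (t : Term L) :
    t.vars ⊆ (Formula.dep ts t).fv := by
  induction ts with
  | nil => simp [Formula.fv]
  | cons u us ih =>
      simp only [Formula.fv, List.foldr] at ih ⊢
      exact ih.trans Finset.subset_union_right

theorem dep_fv_subset₂ (ts : List (Term L)) (t : Term L) :
    ∀ u ∈ ts, u.vars ⊆ (Formula.dep ts t).fv := by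
  induction ts with
  | nil => simp
  | cons w us ih =>
      intro u hu
      simp only [Formula.fv, List.foldr]
      rcases List.mem_cons.1 hu with h | h
      · subst h; exact Finset.subset_union_left
      · exact (ih u h).trans Finset.subset_union_right

/-- Downward closure of dependence logic. -/
theorem tsat_mono (M : Struc L A) :
    ∀ (φ : Formula L) {X Y : Set (ℕ → A)}, Y ⊆ X → TSat M φ X → TSat M φ Y := by
  intro φ
  induction φ with
  | rel R ts => intro X Y hYX h s hs; exact h s (hYX hs)
  | nrel R ts => intro X Y hYX h s hs; exact h s (hYX hs)
  | eq t u => intro X Y hYX h s hs; exact h s (hYX hs)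
  | neq t u => intro X Y hYX h s hs; exact h s (hYX hs)
  | dep ts t => intro X Y hYX h s hs s' hs'; exact h s (hYX hs) s' (hYX hs')
  | and φ ψ ihφ ihψ => intro X Y hYX h; exact ⟨ihφ hYX h.1, ihψ hYX h.2⟩
  | or φ ψ ihφ ihψ =>
      intro X Y hYX h
      obtain ⟨Y₁, Z₁, hsplit, h₁, h₂⟩ := h
      refine ⟨Y₁ ∩ Y, Z₁ ∩ Y, ?_, ihφ Set.inter_subset_left h₁, ihψ Set.inter_subset_left h₂⟩
      ext s
      constructor
      · intro hs
        have : s ∈ Y₁ ∪ Z₁ := hsplit ▸ hYX hs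
        rcases this with h | h
        · exact Or.inl ⟨h, hs⟩
        · exact Or.inr ⟨h, hs⟩
      · rintro (⟨_, hs⟩ | ⟨_, hs⟩) <;> exact hs
  | ex x φ ih =>
      intro X Y hYX h
      obtain ⟨F, hF⟩ := h
      exact ⟨F, ih (Set.image_mono hYX) hF⟩
  | all x φ ih =>
      intro X Y hYX h
      refine ih ?_ h
      rintro s' ⟨s, hs, a, rfl⟩
      exact ⟨s, hYX hs, a, rfl⟩

/-- The key locality lemma: satisfaction transfers between teams with the
same restriction to a superset `V` of the free variables. -/
theorem tsat_local (M : Struc L A) :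
    ∀ (φ : Formula L) (V : Finset ℕ) (X Y : Set (ℕ → A)),
      φ.fv ⊆ V →
      (∀ s ∈ X, ∃ t ∈ Y, ∀ v ∈ V, s v = t v) →
      (∀ t ∈ Y, ∃ s ∈ X, ∀ v ∈ V, s v = t v) →
      TSat M φ X → TSat M φ Y := by
  intro φ
  induction φ with
  | rel R ts =>
      intro V X Y hV hXY hYX h t ht
      obtain ⟨s, hs, hag⟩ := hYX t ht
      have he : (fun i => (ts i).eval M t) = fun i => (ts i).eval M s := by
        funext i
        exact (Term.eval_congr M (ts i) fun v hv => hag v (hV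
          (Finset.mem_biUnion.2 ⟨i, Finset.mem_univ i, hv⟩))).symm
      rw [he]; exact h s hs
  | nrel R ts =>
      intro V X Y hV hXY hYX h t ht
      obtain ⟨s, hs, hag⟩ := hYX t ht
      have he : (fun i => (ts i).eval M t) = fun i => (ts i).eval M s := by
        funext i
        exact (Term.eval_congr M (ts i) fun v hv => hag v (hV
          (Finset.mem_biUnion.2 ⟨i, Finset.mem_univ i, hv⟩))).symm
      rw [he]; exact h s hs
  | eq t u =>
      intro V X Y hV hXY hYX h r hr
      obtain ⟨s, hs, hag⟩ := hYX r hr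
      have h1 : t.eval M s = t.eval M r :=
        Term.eval_congr M t fun v hv => hag v (hV (Finset.mem_union_left _ hv))
      have h2 : u.eval M s = u.eval M r :=
        Term.eval_congr M u fun v hv => hag v (hV (Finset.mem_union_right _ hv))
      rw [← h1, ← h2]; exact h s hs
  | neq t u =>
      intro V X Y hV hXY hYX h r hr
      obtain ⟨s, hs, hag⟩ := hYX r hr
      have h1 : t.eval M s = t.eval M r :=
        Term.eval_congr M t fun v hv => hag v (hV (Finset.mem_union_left _ hv))
      have h2 : u.eval M s = u.eval M r :=
        Term.eval_congr M u fun v hv => hag v (hV (Finset.mem_union_right _ hv))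
      rw [← h1, ← h2]; exact h s hs
  | dep ts t =>
      intro V X Y hV hXY hYX h r₁ hr₁ r₂ hr₂ hprem
      obtain ⟨s₁, hs₁, hag₁⟩ := hYX r₁ hr₁
      obtain ⟨s₂, hs₂, hag₂⟩ := hYX r₂ hr₂
      have ht₁ : t.eval M s₁ = t.eval M r₁ :=
        Term.eval_congr M t fun v hv => hag₁ v (hV (dep_fv_subset₁ ts t hv))
      have ht₂ : t.eval M s₂ = t.eval M r₂ :=
        Term.eval_congr M t fun v hv => hag₂ v (hV (dep_fv_subset₁ ts t hv))
      rw [← ht₁, ← ht₂]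
      refine h s₁ hs₁ s₂ hs₂ fun u hu => ?_
      have hu₁ : u.eval M s₁ = u.eval M r₁ :=
        Term.eval_congr M u fun v hv => hag₁ v (hV (dep_fv_subset₂ ts t u hu hv))
      have hu₂ : u.eval M s₂ = u.eval M r₂ :=
        Term.eval_congr M u fun v hv => hag₂ v (hV (dep_fv_subset₂ ts t u hu hv))
      rw [hu₁, hu₂]; exact hprem u hu
  | and φ ψ ihφ ihψ =>
      intro V X Y hV hXY hYX h
      have hVφ : φ.fv ⊆ V := (Finset.subset_union_left (s₂ := ψ.fv)).trans hV
      have hVψ : ψ.fv ⊆ V := (Finset.subset_union_right (s₁ := φ.fv)).trans hV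
      exact ⟨ihφ V X Y hVφ hXY hYX h.1, ihψ V X Y hVψ hXY hYX h.2⟩
  | or φ ψ ihφ ihψ =>
      intro V X Y hV hXY hYX h
      have hVφ : φ.fv ⊆ V := (Finset.subset_union_left (s₂ := ψ.fv)).trans hV
      have hVψ : ψ.fv ⊆ V := (Finset.subset_union_right (s₁ := φ.fv)).trans hV
      obtain ⟨Y₁, Z₁, rfl, h₁, h₂⟩ := h
      refine ⟨{t ∈ Y | ∃ s ∈ Y₁, ∀ v ∈ V, s v = t v},
              {t ∈ Y | ∃ s ∈ Z₁, ∀ v ∈ V, s v = t v}, ?_, ?_, ?_⟩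
      · ext t
        constructor
        · intro ht
          obtain ⟨s, hs, hag⟩ := hYX t ht
          rcases hs with hs | hs
          · exact Or.inl ⟨ht, s, hs, hag⟩
          · exact Or.inr ⟨ht, s, hs, hag⟩
        · rintro (⟨ht, _⟩ | ⟨ht, _⟩) <;> exact ht
      · refine ihφ V Y₁ _ hVφ ?_ ?_ h₁
        · intro s hs
          obtain ⟨t, ht, hag⟩ := hXY s (Or.inl hs)
          exact ⟨t, ⟨ht, s, hs, hag⟩, hag⟩
        · rintro t ⟨_, s, hs, hag⟩
          exact ⟨s, hs, hag⟩
      · refine ihψ V Z₁ _ hVψ ?_ ?_ h₂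
        · intro s hs
          obtain ⟨t, ht, hag⟩ := hXY s (Or.inr hs)
          exact ⟨t, ⟨ht, s, hs, hag⟩, hag⟩
        · rintro t ⟨_, s, hs, hag⟩
          exact ⟨s, hs, hag⟩
  | ex x φ ih =>
      intro V X Y hV hXY hYX h
      have hVφ : φ.fv ⊆ insert x V := by
        intro v hv
        by_cases hvx : v = x
        · simp [hvx]
        · exact Finset.mem_insert_of_mem (hV (Finset.mem_erase.2 ⟨hvx, hv⟩))
      obtain ⟨F, hF⟩ := h
      classical
      set pick : (ℕ → A) → (ℕ → A) := fun t =>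
        if h : ∃ s ∈ X, ∀ v ∈ V, s v = t v then h.choose else t with hpick
      have hpick_mem : ∀ t ∈ Y, pick t ∈ X := by
        intro t ht
        have h' : ∃ s ∈ X, ∀ v ∈ V, s v = t v := hYX t ht
        simp only [hpick, dif_pos h']
        exact h'.choose_spec.1
      have hpick_ag : ∀ t ∈ Y, ∀ v ∈ V, pick t v = t v := by
        intro t ht
        have h' : ∃ s ∈ X, ∀ v ∈ V, s v = t v := hYX t ht
        simp only [hpick, dif_pos h']
        exact h'.choose_spec.2
      refine ⟨fun t => F (pick t), ?_⟩
      -- the witness team W inside X(F/x)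
      set W : Set (ℕ → A) :=
        (fun s => Function.update s x (F s)) '' (pick '' Y) with hW
      have hWsub : W ⊆ (fun s => Function.update s x (F s)) '' X := by
        rintro w ⟨u, ⟨t, ht, rfl⟩, rfl⟩
        exact ⟨pick t, hpick_mem t ht, rfl⟩
      have hWsat : TSat M φ W := tsat_mono M φ hWsub hF
      refine ih (insert x V) W _ hVφ ?_ ?_ hWsat
      · rintro w ⟨u, ⟨t, ht, rfl⟩, rfl⟩
        refine ⟨Function.update t x (F (pick t)), ⟨t, ht, rfl⟩, ?_⟩
        intro v hv
        show Function.update (pick t) x (F (pick t)) v = Function.update t x (F (pick t)) v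
        by_cases hvx : v = x
        · subst hvx; simp
        · rw [Function.update_of_ne hvx, Function.update_of_ne hvx]
          exact hpick_ag t ht v (Finset.mem_of_mem_insert_of_ne hv hvx)
      · rintro w ⟨t, ht, rfl⟩
        refine ⟨Function.update (pick t) x (F (pick t)), ⟨pick t, ⟨t, ht, rfl⟩, rfl⟩, ?_⟩
        intro v hv
        show Function.update (pick t) x (F (pick t)) v = Function.update t x (F (pick t)) v
        by_cases hvx : v = x
        · subst hvx; simp
        · rw [Function.update_of_ne hvx, Function.update_of_ne hvx]
          exact hpick_ag t ht v (Finset.mem_of_mem_insert_of_ne hv hvx)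
  | all x φ ih =>
      intro V X Y hV hXY hYX h
      have hVφ : φ.fv ⊆ insert x V := by
        intro v hv
        by_cases hvx : v = x
        · simp [hvx]
        · exact Finset.mem_insert_of_mem (hV (Finset.mem_erase.2 ⟨hvx, hv⟩))
      refine ih (insert x V) _ _ hVφ ?_ ?_ h
      · rintro s' ⟨s, hs, a, rfl⟩
        obtain ⟨t, ht, hag⟩ := hXY s hs
        refine ⟨Function.update t x a, ⟨t, ht, a, rfl⟩, ?_⟩
        intro v hv
        by_cases hvx : v = x
        · subst hvx; simp [Function.update]
        · rw [Function.update_of_ne hvx, Function.update_of_ne hvx]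
          exact hag v (Finset.mem_of_mem_insert_of_ne hv hvx)
      · rintro t' ⟨t, ht, a, rfl⟩
        obtain ⟨s, hs, hag⟩ := hYX t ht
        refine ⟨Function.update s x a, ⟨s, hs, a, rfl⟩, ?_⟩
        intro v hv
        by_cases hvx : v = x
        · subst hvx; simp [Function.update]
        · rw [Function.update_of_ne hvx, Function.update_of_ne hvx]
          exact hag v (Finset.mem_of_mem_insert_of_ne hv hvx)

/-- Locality: satisfaction of a dependence logic formula by a team depends
only on the values of the free variables. -/
theorem locality (M : Struc L A) (φ : Formula L) (X : Set (ℕ → A)) (V : Finset ℕ)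
    (hV : φ.fv ⊆ V) : TSat M φ X ↔ TSat M φ (restrictTeam X V) := by
  have h1 : ∀ s ∈ X, ∃ t ∈ restrictTeam X V, ∀ v ∈ V, s v = t v := by
    intro s hs
    exact ⟨s, ⟨s, hs, fun v _ => rfl⟩, fun v _ => rfl⟩
  have h2 : ∀ t ∈ restrictTeam X V, ∃ s ∈ X, ∀ v ∈ V, s v = t v := by
    rintro t ⟨s, hs, hag⟩
    exact ⟨s, hs, fun v hv => (hag v hv).symm⟩
  have h1' : ∀ t ∈ X, ∃ s ∈ restrictTeam X V, ∀ v ∈ V, s v = t v := by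
    intro t ht
    obtain ⟨s, hs, hag⟩ := h1 t ht
    exact ⟨s, hs, fun v hv => (hag v hv).symm⟩
  have h2' : ∀ s ∈ restrictTeam X V, ∃ t ∈ X, ∀ v ∈ V, s v = t v := by
    intro s hs
    obtain ⟨t, ht, hag⟩ := h2 s hs
    exact ⟨t, ht, fun v hv => (hag v hv).symm⟩
  constructor
  · exact tsat_local M φ V X _ hV h1 h2
  · exact tsat_local M φ V _ X hV h2' h1'
end

section
/- The sentence φ := ∀x ∃y ∃z(=(y,z) ∧ (x = z ∧ y ≠ c)) of dependence logic is true in a model 𝔄 (with constant c) if and only if the domain A is infinite. -/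
variable {L : Lang} {A : Type*}

/-- A vocabulary with a single constant symbol `c` and nothing else. -/
def constLang : Lang where
  Func := fun n => match n with | 0 => Unit | _ => Empty
  Rel := fun _ => Empty

/-- The constant term `c`. -/
def cTerm : Term constLang := .func (n := 0) () Fin.elim0

/-- The sentence `φ = ∀x ∃y ∃z (=(y,z) ∧ (x = z ∧ y ≠ c))` (with `x,y,z` the
variables `0,1,2`). -/
def phiInf : Formula constLang :=
  .all 0 (.ex 1 (.ex 2 (.and (.dep [.var 1] (.var 2))
    (.and (.eq (.var 0) (.var 2)) (.neq (.var 1) cTerm)))))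

/-- `φ` is true in a model `𝔄` with a constant `c` iff the domain is
infinite. -/
theorem phiInf_iff_infinite {A : Type*} (M : Struc constLang A) (s : ℕ → A) :
    TSat M phiInf {s} ↔ Infinite A := by
  classical
  set c : A := M.funcs (n := 0) () Fin.elim0 with hc
  have hfun : ∀ (f : Fin 0 → A), M.funcs (n := 0) () f = c := by
    intro f; rw [hc]; congr 1; funext i; exact i.elim0
  simp only [phiInf, TSat, Term.eval, Set.mem_setOf_eq, Set.mem_image,
    Set.mem_singleton_iff, List.mem_singleton, forall_eq, hfun]
  constructor
  · rintro ⟨F, G, hdep, heq, hneq⟩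
    set g : A → A := fun a => F (Function.update s 0 a) with hg
    set w : A → ℕ → A := fun a =>
      Function.update (Function.update (Function.update s 0 a) 1 (g a)) 2
        (G (Function.update (Function.update s 0 a) 1 (g a))) with hw
    have mem : ∀ a : A, ∃ x,
        (∃ x₁, (∃ s₂, s₂ = s ∧ ∃ b, x₁ = Function.update s₂ 0 b) ∧
          Function.update x₁ 1 (F x₁) = x) ∧ Function.update x 2 (G x) = w a := by
      intro a
      exact ⟨_, ⟨_, ⟨s, rfl, a, rfl⟩, rfl⟩, rfl⟩
    have hw0 : ∀ a, w a 0 = a := by intro a; simp [hw]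
    have hw1 : ∀ a, w a 1 = g a := by intro a; simp [hw]
    have hw2 : ∀ a, w a 2 = a := by
      intro a
      have := heq (w a) (mem a)
      rw [hw0] at this; exact this.symm
    have ginj : Function.Injective g := by
      intro a b hab
      have := hdep (w a) (mem a) (w b) (mem b) (by rw [hw1, hw1, hab])
      rwa [hw2, hw2] at this
    have gne : ∀ a, g a ≠ c := by
      intro a
      have := hneq (w a) (mem a)
      rw [hw1] at this; simpa [cTerm, Term.eval, hfun] using this
    by_contra hinf
    have : Finite A := not_infinite_iff_finite.mp hinf
    obtain ⟨a, ha⟩ := (Finite.injective_iff_surjective.mp ginj) c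
    exact gne a ha
  · intro hA
    have hcard : Cardinal.mk (Option A) = Cardinal.mk A := by
      simp [Cardinal.mk_option, Cardinal.add_one_eq (Cardinal.infinite_iff.mp hA)]
    obtain ⟨e⟩ := Cardinal.eq.mp hcard
    set g : A → A := fun a => Equiv.swap (e none) c (e (some a)) with hg
    have ginj : Function.Injective g := by
      intro a b h
      exact Option.some_injective _ (e.injective ((Equiv.swap _ _).injective h))
    have gne : ∀ a, g a ≠ c := by
      intro a h
      have h2 : Equiv.swap (e none) c (e (some a)) = Equiv.swap (e none) c (e none) := by
        rw [Equiv.swap_apply_left]; exact h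
      exact Option.some_ne_none a (e.injective ((Equiv.swap _ _).injective h2))
    refine ⟨fun t => g (t 0), fun u => u 0, ?_, ?_, ?_⟩
    · rintro s₁ ⟨x, ⟨x₁, ⟨s₂, rfl, a, rfl⟩, rfl⟩, rfl⟩
        s' ⟨y, ⟨y₁, ⟨t₂, rfl, b, rfl⟩, rfl⟩, rfl⟩ h1
      simp only [Function.update] at h1 ⊢
      simp at h1 ⊢
      exact ginj h1
    · rintro s₁ ⟨x, ⟨x₁, ⟨s₂, rfl, a, rfl⟩, rfl⟩, rfl⟩
      simp
    · rintro s₁ ⟨x, ⟨x₁, ⟨s₂, rfl, a, rfl⟩, rfl⟩, rfl⟩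
      simpa [cTerm, Term.eval, hfun] using gne a
end

section
/- Soundness of disjunction elimination restricted to first-order conclusions: if 𝔄 ⊨_X A ∨ B (team semantics), C is a first-order formula, and both (for all teams Y, 𝔄 ⊨_Y A implies 𝔄 ⊨_Y C) and (for all teams Z, 𝔄 ⊨_Z B implies 𝔄 ⊨_Z C), then 𝔄 ⊨_X C. -/
variable {L : Lang} {A : Type*}

theorem flat (M : Struc L A) : ∀ (C : Formula L), C.IsFO → ∀ X : Set (ℕ → A),
    (TSat M C X ↔ ∀ s ∈ X, Sat M s C)
  | .rel R ts, _, X => Iff.rfl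
  | .nrel R ts, _, X => Iff.rfl
  | .eq t u, _, X => Iff.rfl
  | .neq t u, _, X => Iff.rfl
  | .and φ ψ, h, X => by
    simp only [TSat, Sat, flat M φ h.1, flat M ψ h.2]
    constructor
    · rintro ⟨h1, h2⟩ s hs; exact ⟨h1 s hs, h2 s hs⟩
    · intro h; exact ⟨fun s hs => (h s hs).1, fun s hs => (h s hs).2⟩
  | .or φ ψ, h, X => by
    simp only [TSat, Sat]
    constructor
    · rintro ⟨Y, Z, rfl, hY, hZ⟩ s hs
      rcases hs with hs | hs
      · exact Or.inl ((flat M φ h.1 Y).mp hY s hs)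
      · exact Or.inr ((flat M ψ h.2 Z).mp hZ s hs)
    · intro hp
      refine ⟨{s ∈ X | Sat M s φ}, {s ∈ X | Sat M s ψ}, ?_, ?_, ?_⟩
      · ext s
        constructor
        · intro hs; rcases hp s hs with h' | h'
          · exact Or.inl ⟨hs, h'⟩
          · exact Or.inr ⟨hs, h'⟩
        · rintro (⟨hs, _⟩ | ⟨hs, _⟩) <;> exact hs
      · exact (flat M φ h.1 _).mpr fun s hs => hs.2
      · exact (flat M ψ h.2 _).mpr fun s hs => hs.2
  | .ex x φ, h, X => by
    simp only [TSat, Sat]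
    constructor
    · rintro ⟨F, hF⟩ s hs
      exact ⟨F s, (flat M φ h _).mp hF _ ⟨s, hs, rfl⟩⟩
    · intro hp
      classical
      refine ⟨fun s => if hs : ∃ a, Sat M (Function.update s x a) φ
        then hs.choose else s 0, ?_⟩
      rw [flat M φ h]
      rintro s' ⟨s, hs, rfl⟩
      have hex : ∃ a, Sat M (Function.update s x a) φ := hp s hs
      simp only [dif_pos hex]
      exact hex.choose_spec
  | .all x φ, h, X => by
    simp only [TSat, Sat]
    rw [flat M φ h]
    constructor
    · intro hp s hs a
      exact hp _ ⟨s, hs, a, rfl⟩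
    · rintro hp s' ⟨s, hs, a, rfl⟩
      exact hp s hs a

/-- Soundness of disjunction elimination for first-order conclusions:
if `𝔄 ⊨_X A ∨ B`, `C` is first-order, every team satisfying `A` satisfies
`C`, and every team satisfying `B` satisfies `C`, then `𝔄 ⊨_X C`. -/
theorem or_elim_sound (M : Struc L A) (φ ψ C : Formula L) (X : Set (ℕ → A))
    (hFO : C.IsFO)
    (hor : TSat M (.or φ ψ) X)
    (hA : ∀ Y : Set (ℕ → A), TSat M φ Y → TSat M C Y)
    (hB : ∀ Z : Set (ℕ → A), TSat M ψ Z → TSat M C Z) :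
    TSat M C X := by
  obtain ⟨Y, Z, rfl, hY, hZ⟩ := hor
  rw [flat M C hFO]
  rintro s (hs | hs)
  · exact (flat M C hFO Y).mp (hA Y hY) s hs
  · exact (flat M C hFO Z).mp (hB Z hZ) s hs
end

section
/- If a Σ¹₁ sentence φ of the normal form ∀x⃗ ∃y⃗ (⋀ⱼ =(w⃗^{iⱼ}, y_{iⱼ}) ∧ ψ(x⃗,y⃗)) (ψ quantifier-free first-order) is true in a model 𝔄 (team semantics), then player II has a winning strategy in the associated infinite game G(𝔄,Φ): players alternately pick tuples a⃗ₙ ∈ A^m (player I) and b⃗ₙ ∈ A^n (player II), and II wins an infinite play iff for all n: ψ(a⃗ₙ, b⃗ₙ) holds and for all i < n and each dependence atom =(w⃗^p, y_p) in S, if the w⃗^p-values at rounds i and n agree then the y_p-values agree. -/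
variable {A : Type*} {m n : ℕ}

def wVal (wIdx : Fin n → List (Fin m ⊕ Fin n)) (p : Fin n)
    (a : Fin m → A) (b : Fin n → A) : List A :=
  (wIdx p).map (Sum.elim a b)

def WF (wIdx : Fin n → List (Fin m ⊕ Fin n)) : Prop :=
  ∀ p : Fin n, ∀ q : Fin n, Sum.inr q ∈ wIdx p → q < p

def TeamTrue (ψ : (Fin m → A) → (Fin n → A) → Prop)
    (wIdx : Fin n → List (Fin m ⊕ Fin n)) : Prop :=
  ∃ f : (Fin m → A) → (Fin n → A),
    (∀ a, ψ a (f a)) ∧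
    ∀ p : Fin n, ∀ a a' : Fin m → A,
      wVal wIdx p a (f a) = wVal wIdx p a' (f a') → f a p = f a' p

def playII (σ : List (Fin m → A) → (Fin n → A)) (x : ℕ → Fin m → A)
    (k : ℕ) : Fin n → A :=
  σ ((List.range (k + 1)).map x)

def WinningII (ψ : (Fin m → A) → (Fin n → A) → Prop)
    (wIdx : Fin n → List (Fin m ⊕ Fin n))
    (σ : List (Fin m → A) → (Fin n → A)) : Prop :=
  ∀ x : ℕ → Fin m → A, ∀ k : ℕ,
    ψ (x k) (playII σ x k) ∧
    ∀ i < k, ∀ p : Fin n,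
      wVal wIdx p (x i) (playII σ x i) = wVal wIdx p (x k) (playII σ x k) →
      playII σ x i p = playII σ x k p

/-- If the normal-form sentence `φ` is true in `𝔄` (team semantics), then
player II has a winning strategy in the game `G(𝔄, Φ)`. -/
theorem teamTrue_winningII [Nonempty A]
    (ψ : (Fin m → A) → (Fin n → A) → Prop)
    (wIdx : Fin n → List (Fin m ⊕ Fin n)) (hwf : WF wIdx)
    (h : TeamTrue ψ wIdx) :
    ∃ σ : List (Fin m → A) → (Fin n → A), WinningII ψ wIdx σ := by
  obtain ⟨f, hψ, hdep⟩ := h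
  refine ⟨fun l => f (l.getLastD (Classical.arbitrary _)), fun x k => ?_⟩
  have key : ∀ j : ℕ, playII (fun l => f (l.getLastD (Classical.arbitrary _))) x j = f (x j) := by
    intro j
    simp [playII, List.getLastD_eq_getLast?, List.getLast?_map, List.range_succ]
  rw [key]
  refine ⟨hψ _, fun i _ p hw => ?_⟩
  rw [key] at hw ⊢
  exact hdep p (x i) (x k) hw
end

section
/- Conversely, if 𝔄 is a countable model and player II has a winning strategy in the game G(𝔄,Φ) associated with φ = ∀x⃗ ∃y⃗ (⋀ⱼ =(w⃗^{iⱼ}, y_{iⱼ}) ∧ ψ(x⃗,y⃗)), then 𝔄 ⊨ φ in team semantics. -/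
/-
Setting for the game-expression analysis of a dependence logic sentence in
normal form  φ = ∀x⃗ ∃y⃗ (⋀ⱼ =(w⃗^{iⱼ}, y_{iⱼ}) ∧ ψ(x⃗, y⃗)):
`A` is the (nonempty) domain, `m` the length of `x⃗`, `n` the length of `y⃗`,
`ψ` the quantifier-free first-order matrix (abstracted as a predicate on
tuples), and for each `p : Fin n` the tuple `w⃗^p` of the set `S` is given by
a list `wIdx p` of variables, each either some `xᵢ` (`Sum.inl i`) or some
earlier `y_q` (`Sum.inr q` with `q < p`; this constraint is `WF wIdx`).
-/

variable {A : Type*} {m n : ℕ}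

/-- Conversely, over a countable domain, if player II has a winning strategy
in the game `G(𝔄, Φ)`, then the normal-form sentence `φ` is true in `𝔄`
(team semantics). -/
theorem winningII_teamTrue [Nonempty A] [Countable A]
    (ψ : (Fin m → A) → (Fin n → A) → Prop)
    (wIdx : Fin n → List (Fin m ⊕ Fin n)) (hwf : WF wIdx)
    (h : ∃ σ : List (Fin m → A) → (Fin n → A), WinningII ψ wIdx σ) :
    TeamTrue ψ wIdx := by
  obtain ⟨σ, hσ⟩ := h
  obtain ⟨e, he⟩ := exists_surjective_nat (Fin m → A)
  choose k hk using he
  refine ⟨fun a => playII σ e (k a), ?_, ?_⟩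
  · intro a
    have := (hσ e (k a)).1
    rwa [hk] at this
  · intro p a a' hval
    rcases lt_trichotomy (k a) (k a') with h1 | h1 | h1
    · exact (hσ e (k a')).2 (k a) h1 p (by rw [hk, hk]; exact hval)
    · simp only [h1]
    · exact ((hσ e (k a)).2 (k a') h1 p (by rw [hk, hk]; exact hval.symm)).symm
end

section
/- In a finite structure 𝔄, if 𝔄 satisfies the n-th approximation Φⁿ for every n ∈ ℕ, then player II has a winning strategy in the infinite game G(𝔄,Φ) (and hence 𝔄 satisfies the game expression Φ). -/
/-
Setting for the game-expression analysis of a dependence logic sentence in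
normal form  φ = ∀x⃗ ∃y⃗ (⋀ⱼ =(w⃗^{iⱼ}, y_{iⱼ}) ∧ ψ(x⃗, y⃗)):
`A` is the (nonempty) domain, `m` the length of `x⃗`, `n` the length of `y⃗`,
`ψ` the quantifier-free first-order matrix (abstracted as a predicate on
tuples), and for each `p : Fin n` the tuple `w⃗^p` of the set `S` is given by
a list `wIdx p` of variables, each either some `xᵢ` (`Sum.inl i`) or some
earlier `y_q` (`Sum.inr q` with `q < p`; this constraint is `WF wIdx`).
-/

variable {A : Type*} {m n : ℕ}

/-- A finite history of the game is good if `ψ` holds at each round and all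
pairwise uniformity clauses between rounds hold. -/
def Good (ψ : (Fin m → A) → (Fin n → A) → Prop)
    (wIdx : Fin n → List (Fin m ⊕ Fin n))
    (hist : List ((Fin m → A) × (Fin n → A))) : Prop :=
  (∀ pr ∈ hist, ψ pr.1 pr.2) ∧
  ∀ i j : Fin hist.length, (i : ℕ) < (j : ℕ) → ∀ p : Fin n,
    wVal wIdx p (hist.get i).1 (hist.get i).2 =
      wVal wIdx p (hist.get j).1 (hist.get j).2 →
    (hist.get i).2 p = (hist.get j).2 p

/-- `Survive ψ wIdx k hist` says that from the position `hist` player II can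
survive `k` more rounds; `Survive ψ wIdx k []` is exactly the truth (in
ordinary first-order semantics) of the `k`-th approximation `Φᵏ`. -/
def Survive (ψ : (Fin m → A) → (Fin n → A) → Prop)
    (wIdx : Fin n → List (Fin m ⊕ Fin n)) :
    ℕ → List ((Fin m → A) × (Fin n → A)) → Prop
  | 0, _ => True
  | k + 1, hist => ∀ a : Fin m → A, ∃ b : Fin n → A,
      Good ψ wIdx (hist ++ [(a, b)]) ∧ Survive ψ wIdx k (hist ++ [(a, b)])

lemma survive_mono (ψ : (Fin m → A) → (Fin n → A) → Prop)
    (wIdx : Fin n → List (Fin m ⊕ Fin n)) :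
    ∀ (k : ℕ) (hist : List ((Fin m → A) × (Fin n → A))),
      Survive ψ wIdx (k + 1) hist → Survive ψ wIdx k hist
  | 0, _, _ => trivial
  | k + 1, hist, h => fun a => by
      obtain ⟨b, hg, hs⟩ := h a
      exact ⟨b, hg, survive_mono ψ wIdx k _ hs⟩

lemma survive_le (ψ : (Fin m → A) → (Fin n → A) → Prop)
    (wIdx : Fin n → List (Fin m ⊕ Fin n)) {k k' : ℕ} (hk : k ≤ k')
    (hist : List ((Fin m → A) × (Fin n → A))) :
    Survive ψ wIdx k' hist → Survive ψ wIdx k hist := by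
  obtain ⟨d, rfl⟩ := Nat.exists_eq_add_of_le hk
  clear hk
  induction d with
  | zero => exact id
  | succ d ih => exact fun h => ih (survive_mono ψ wIdx _ _ h)

lemma exists_good_step [Finite A]
    (ψ : (Fin m → A) → (Fin n → A) → Prop)
    (wIdx : Fin n → List (Fin m ⊕ Fin n))
    (hist : List ((Fin m → A) × (Fin n → A)))
    (hall : ∀ k, Survive ψ wIdx k hist) (a : Fin m → A) :
    ∃ b : Fin n → A, Good ψ wIdx (hist ++ [(a, b)]) ∧
      ∀ k, Survive ψ wIdx k (hist ++ [(a, b)]) := by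
  choose g hg1 hg2 using fun k => hall (k + 1) a
  obtain ⟨b, hb⟩ := Finite.exists_infinite_fiber g
  have hb' : (g ⁻¹' {b}).Infinite := Set.infinite_coe_iff.mp hb
  refine ⟨b, ?_, ?_⟩
  · obtain ⟨j, hj, -⟩ := hb'.exists_gt 0
    have hjb : g j = b := hj
    rw [← hjb]; exact hg1 j
  · intro k
    obtain ⟨j, hj, hlt⟩ := hb'.exists_gt k
    have hjb : g j = b := hj
    rw [← hjb]
    exact survive_le ψ wIdx (le_of_lt hlt) _ (hg2 j)

open Classical in
noncomputable def step [Nonempty A] [Finite A]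
    (ψ : (Fin m → A) → (Fin n → A) → Prop)
    (wIdx : Fin n → List (Fin m ⊕ Fin n))
    (hist : List ((Fin m → A) × (Fin n → A))) (a : Fin m → A) :
    Fin n → A :=
  if h : ∀ k, Survive ψ wIdx k hist then
    (exists_good_step ψ wIdx hist h a).choose
  else Classical.arbitrary _

lemma step_spec [Nonempty A] [Finite A]
    (ψ : (Fin m → A) → (Fin n → A) → Prop)
    (wIdx : Fin n → List (Fin m ⊕ Fin n))
    (hist : List ((Fin m → A) × (Fin n → A)))
    (h : ∀ k, Survive ψ wIdx k hist) (a : Fin m → A) :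
    Good ψ wIdx (hist ++ [(a, step ψ wIdx hist a)]) ∧
      ∀ k, Survive ψ wIdx k (hist ++ [(a, step ψ wIdx hist a)]) := by
  rw [step, dif_pos h]
  exact (exists_good_step ψ wIdx hist h a).choose_spec

def buildH (st : List ((Fin m → A) × (Fin n → A)) → (Fin m → A) → (Fin n → A)) :
    List (Fin m → A) → List ((Fin m → A) × (Fin n → A)) →
      List ((Fin m → A) × (Fin n → A))
  | [], hst => hst
  | a :: l, hst => buildH st l (hst ++ [(a, st hst a)])

lemma buildH_append
    (st : List ((Fin m → A) × (Fin n → A)) → (Fin m → A) → (Fin n → A))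
    (l : List (Fin m → A)) (a : Fin m → A)
    (hst : List ((Fin m → A) × (Fin n → A))) :
    buildH st (l ++ [a]) hst =
      buildH st l hst ++ [(a, st (buildH st l hst) a)] := by
  induction l generalizing hst with
  | nil => simp [buildH]
  | cons c l ih => simp [buildH, ih]

/-- In a finite structure, if every first-order approximation `Φᵏ` holds,
then player II has a winning strategy in the infinite game `G(𝔄, Φ)`. -/
theorem approximations_winningII_of_finite [Nonempty A] [Finite A]
    (ψ : (Fin m → A) → (Fin n → A) → Prop)
    (wIdx : Fin n → List (Fin m ⊕ Fin n)) (hwf : WF wIdx)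
    (h : ∀ k : ℕ, Survive ψ wIdx k []) :
    ∃ σ : List (Fin m → A) → (Fin n → A), WinningII ψ wIdx σ := by
  set st := step ψ wIdx with hst
  set σ : List (Fin m → A) → (Fin n → A) := fun l =>
    ((buildH st l []).getLast?).elim (Classical.arbitrary _) Prod.snd with hσ
  refine ⟨σ, ?_⟩
  intro x k
  set P : ℕ → List ((Fin m → A) × (Fin n → A)) := fun j =>
    buildH st ((List.range j).map x) [] with hP
  have hP0 : P 0 = [] := rfl
  have hPsucc : ∀ j, P (j + 1) = P j ++ [(x j, st (P j) (x j))] := by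
    intro j
    simp only [hP, List.range_succ, List.map_append, List.map_cons,
      List.map_nil, buildH_append]
  have hlen : ∀ j, (P j).length = j := by
    intro j
    induction j with
    | zero => simp [hP0]
    | succ j ih => simp [hPsucc, ih]
  have hplay : ∀ j, playII σ x j = st (P j) (x j) := by
    intro j
    show σ ((List.range (j + 1)).map x) = _
    have : buildH st ((List.range (j + 1)).map x) [] = P (j + 1) := rfl
    simp only [hσ, this, hPsucc, List.getLast?_concat, Option.elim]
  have hinv : ∀ j, ∀ i, Survive ψ wIdx i (P j) := by
    intro j
    induction j with
    | zero => intro i; rw [hP0]; exact h i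
    | succ j ih =>
      intro i
      rw [hPsucc]
      exact (step_spec ψ wIdx (P j) ih (x j)).2 i
  have hgood : ∀ j, Good ψ wIdx (P (j + 1)) := by
    intro j
    rw [hPsucc]
    exact (step_spec ψ wIdx (P j) (hinv j) (x j)).1
  have hget : ∀ K i (hi : i < (P K).length),
      (P K).get ⟨i, hi⟩ = (x i, st (P i) (x i)) := by
    intro K
    induction K with
    | zero => intro i hi; rw [hlen] at hi; omega
    | succ K ih =>
      intro i hi
      have hiK : i < K + 1 := by rwa [hlen] at hi
      rcases Nat.lt_or_ge i K with h' | h'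
      · have hi' : i < (P K).length := by rw [hlen]; exact h'
        have := ih i hi'
        simp only [List.get_eq_getElem] at this ⊢
        rw [List.getElem_of_eq (hPsucc K) hi]
        rw [List.getElem_append_left hi']
        exact this
      · have hiK' : i = K := by omega
        subst hiK'
        simp only [List.get_eq_getElem]
        rw [List.getElem_of_eq (hPsucc i) hi]
        have hl : (P i).length = i := hlen i
        simp [hl]
  constructor
  · have hg := (hgood k).1
    have hmem : (x k, st (P k) (x k)) ∈ P (k + 1) := by
      rw [hPsucc]; simp
    have := hg _ hmem
    rw [hplay k]
    exact this
  · intro i hik p heq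
    have hg := (hgood k).2
    have hi' : i < (P (k + 1)).length := by rw [hlen]; omega
    have hk' : k < (P (k + 1)).length := by rw [hlen]; omega
    have key := hg ⟨i, hi'⟩ ⟨k, hk'⟩ hik p
    rw [hget (k + 1) i hi', hget (k + 1) k hk'] at key
    simp only at key
    rw [hplay i, hplay k] at heq ⊢
    exact key heq
end
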